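/- For every A ⊆ E: r'(A ∪ {γ}) = r(A) if A contains no OX-circuit of M but A ∪ {e} contains an OX-circuit of M; r'(A ∪ {γ}) = r(A) + 2 if A contains an OX-circuit of M and e ∉ cl(A); and r'(A ∪ {γ}) = r(A) + 1 otherwise. -/

import Mathlib

open Set

namespace ESSplit

variable {α : Type*}

/-- A circuit of a matroid: a minimal dependent set. -/
def IsCircuit (M : Matroid α) (C : Set α) : Prop :=
  M.Dep C ∧ ∀ D, D ⊂ C → M.Indep D

/-- A binary matroid: one representable over GF(2). -/
def IsBinary (M : Matroid α) : Prop :=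
  ∃ (n : ℕ) (φ : α → (Fin n → ZMod 2)),
    ∀ I, I ⊆ M.E → (M.Indep I ↔ LinearIndependent (ZMod 2) (fun x : I => φ x.1))

/-- An OX-circuit: a circuit meeting `X` in an odd number of elements. -/
def IsOX (M : Matroid α) (X C : Set α) : Prop :=
  IsCircuit M C ∧ Odd (C ∩ X).ncard

/-- An EX-circuit: a circuit meeting `X` in an even number of elements. -/
def IsEX (M : Matroid α) (X C : Set α) : Prop :=
  IsCircuit M C ∧ Even (C ∩ X).ncard

/-- `D` is a union of two disjoint OX-circuits containing no EX-circuit. -/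
def OXUnion (M : Matroid α) (X D : Set α) : Prop :=
  ∃ C₁ C₂, IsOX M X C₁ ∧ IsOX M X C₂ ∧ Disjoint C₁ C₂ ∧ D = C₁ ∪ C₂ ∧
    ¬ ∃ C₀, IsEX M X C₀ ∧ C₀ ⊆ D

/-- The description of the circuits of the es-splitting matroid `M_X^e`. -/
def ESCircuit (M : Matroid α) (X : Set α) (e a γ : α) (C : Set α) : Prop :=
  C = {e, a, γ} ∨
  IsEX M X C ∨
  (OXUnion M X C ∧ ∀ D, OXUnion M X D → D ⊆ C → D = C) ∨
  (∃ C₀, IsOX M X C₀ ∧ C = C₀ ∪ {a}) ∨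
  (∃ C₀, IsOX M X C₀ ∧ e ∉ C₀ ∧ C = C₀ ∪ {e, γ}) ∨
  (∃ C₀, IsOX M X C₀ ∧ e ∈ C₀ ∧ C = (C₀ \ {e}) ∪ {γ}) ∨
  (∃ C₀, IsCircuit M C₀ ∧ e ∈ C₀ ∧ Odd (((C₀ \ {e}) ∩ X).ncard) ∧
      C = (C₀ \ {e}) ∪ {a, γ})

/-- `M'` is the es-splitting matroid `M_X^e` of `M` (with new elements `a`, `γ`):
it has ground set `M.E ∪ {a, γ}` and its circuits are exactly as described. -/
def IsESSplit (M M' : Matroid α) (X : Set α) (e a γ : α) : Prop :=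
  M'.E = M.E ∪ {a, γ} ∧ ∀ C, IsCircuit M' C ↔ ESCircuit M X e a γ C

/-- The set `T(A)`. -/
def T (M : Matroid α) (X : Set α) (e : α) (A : Set α) : Set α :=
  {x | x ∈ M.E \ A ∧ x ≠ e ∧ ∃ C, IsOX M X C ∧ x ∈ C ∧ e ∈ C ∧ C ⊆ A ∪ {e, x}}

/-- The set `F(A)`. -/
def F (M : Matroid α) (X A : Set α) : Set α :=
  {x | x ∈ M.closure A \ A ∧ ∃ C, IsOX M X C ∧ x ∈ C ∧ C ⊆ M.closure A}

/-- The rank of a set `A` in a (finite) matroid: the maximum size of an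
independent subset of `A`. -/
noncomputable def rk (M : Matroid α) (A : Set α) : ℕ :=
  sSup {n | ∃ I, M.Indep I ∧ I ⊆ A ∧ I.ncard = n}

end ESSplit

namespace ESSplit

variable {α : Type*}

variable {N : Matroid α} {C D I J A : Set α} {x : α}

lemma IsCircuit.dep (h : IsCircuit N C) : N.Dep C := h.1

lemma IsCircuit.subset_ground (h : IsCircuit N C) : C ⊆ N.E := h.1.subset_ground

lemma IsCircuit.nonempty (h : IsCircuit N C) : C.Nonempty := h.1.nonempty

lemma IsCircuit.not_subset_indep (h : IsCircuit N C) (hI : N.Indep I) : ¬ C ⊆ I :=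
  fun hCI => h.1.not_indep (hI.subset hCI)

lemma dep_has_circuit (hfin : N.E.Finite) (hD : N.Dep D) :
    ∃ C, IsCircuit N C ∧ C ⊆ D := by
  classical
  have hDfin : D.Finite := hfin.subset hD.subset_ground
  -- pick a dependent subset of minimal ncard
  have hex : ∃ n, ∃ C, C ⊆ D ∧ N.Dep C ∧ C.ncard = n := ⟨D.ncard, D, Subset.rfl, hD, rfl⟩
  obtain ⟨C, hCD, hCdep, hCn⟩ := Nat.find_spec hex
  refine ⟨C, ⟨hCdep, fun E hE => ?_⟩, hCD⟩
  by_contra hEdep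
  have hEE : E ⊆ N.E := hE.subset.trans hCdep.subset_ground
  have hEdep' : N.Dep E := (Matroid.not_indep_iff hEE).mp hEdep
  have h1 : Nat.find hex ≤ E.ncard := Nat.find_min' hex ⟨E, hE.subset.trans hCD, hEdep', rfl⟩
  have h2 : E.ncard < C.ncard := Set.ncard_lt_ncard hE (hDfin.subset hCD)
  omega


lemma indep_of_no_circuit (hfin : N.E.Finite) (hIE : I ⊆ N.E)
    (h : ∀ C, IsCircuit N C → ¬ C ⊆ I) : N.Indep I := by
  by_contra hdep
  obtain ⟨C, hC, hCI⟩ := dep_has_circuit hfin ((Matroid.not_indep_iff hIE).mp hdep)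
  exact h C hC hCI

lemma fund_circuit (hfin : N.E.Finite) (hJ : N.Indep J) (hx : x ∈ N.closure J)
    (hxJ : x ∉ J) : ∃ C, IsCircuit N C ∧ x ∈ C ∧ C ⊆ insert x J := by
  have hdep : N.Dep (insert x J) := hJ.insert_dep_iff.mpr ⟨hx, hxJ⟩
  obtain ⟨C, hC, hCsub⟩ := dep_has_circuit hfin hdep
  refine ⟨C, hC, ?_, hCsub⟩
  by_contra hxC
  have hCJ : C ⊆ J := by
    intro y hy
    rcases hCsub hy with h | h
    · exact absurd (h ▸ hy) hxC
    · exact h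
  exact hC.not_subset_indep hJ hCJ

lemma indep_ncard_le_of_basis (hfin : N.E.Finite) (hJ : N.IsBasis J A)
    (hI : N.Indep I) (hIA : I ⊆ A) : I.ncard ≤ J.ncard := by
  obtain ⟨I', hI', hII'⟩ := hI.subset_isBasis_of_subset hIA hJ.subset_ground
  have hcard := hI'.encard_eq_encard hJ
  have hI'fin : I'.Finite := hfin.subset hI'.indep.subset_ground
  have hJfin : J.Finite := hfin.subset hJ.indep.subset_ground
  have : I'.ncard = J.ncard := by
    rw [Set.ncard_def, Set.ncard_def, hcard]
  exact le_trans (Set.ncard_le_ncard hII' hI'fin) this.le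


lemma rk_eq_of_forall {n : ℕ} (hmem : ∃ I, N.Indep I ∧ I ⊆ A ∧ I.ncard = n)
    (hub : ∀ I, N.Indep I → I ⊆ A → I.ncard ≤ n) : rk N A = n :=
  IsGreatest.csSup_eq ⟨hmem, by rintro m ⟨I, hI, hIA, rfl⟩; exact hub I hI hIA⟩

lemma rk_eq_ncard_of_basis (hfin : N.E.Finite) (hIA : N.IsBasis I A) :
    rk N A = I.ncard :=
  rk_eq_of_forall ⟨I, hIA.indep, hIA.subset, rfl⟩
    (fun _ hI' hI'A => indep_ncard_le_of_basis hfin hIA hI' hI'A)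

lemma circuit_elim (hfin : N.E.Finite) (hC : IsCircuit N C) (hD : IsCircuit N D)
    (hne : C ≠ D) (hx : x ∈ C ∩ D) :
    ∃ C', IsCircuit N C' ∧ C' ⊆ (C ∪ D) \ {x} := by
  have hU : C ∪ D ⊆ N.E := union_subset hC.subset_ground hD.subset_ground
  have hfinU : (C ∪ D).Finite := hfin.subset hU
  suffices hdep : N.Dep ((C ∪ D) \ {x}) from dep_has_circuit hfin hdep
  rw [Matroid.dep_iff]
  refine ⟨fun hindep => ?_, (diff_subset).trans hU⟩
  have hCD : ¬ C ⊆ D := by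
    intro h
    rcases h.eq_or_ssubset with h' | h'
    · exact hne h'
    · exact hC.dep.not_indep (hD.2 _ h')
  obtain ⟨y, hyC, hyD⟩ := not_subset.mp hCD
  have hCy : N.Indep (C \ {y}) := hC.2 _ (sdiff_singleton_ssubset.mpr hyC)
  obtain ⟨J, hJ, hsub⟩ := hCy.subset_isBasis_of_subset
    ((diff_subset).trans subset_union_left) hU
  have hyJ : y ∉ J := by
    intro hyJ
    exact hC.not_subset_indep hJ.indep (by
      intro z hz
      by_cases hzy : z = y
      · exact hzy ▸ hyJ
      · exact hsub ⟨hz, hzy⟩)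
  have hDJ : ¬ D ⊆ J := hD.not_subset_indep hJ.indep
  obtain ⟨z, hzD, hzJ⟩ := not_subset.mp hDJ
  have hzy : z ≠ y := fun h => hyD (h ▸ hzD)
  have hJsub : J ⊆ (C ∪ D) \ {y, z} := by
    intro w hw
    refine ⟨hJ.subset hw, ?_⟩
    rintro (rfl | rfl)
    · exact hyJ hw
    · exact hzJ hw
  have hyzU : ({y, z} : Set α) ⊆ C ∪ D := by
    rintro w (rfl | rfl)
    · exact Or.inl hyC
    · exact Or.inr hzD
  have h2 : J.ncard ≤ (C ∪ D).ncard - 2 := by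
    have := Set.ncard_le_ncard hJsub (hfinU.diff)
    rwa [Set.ncard_diff hyzU, Set.ncard_pair hzy.symm] at this
  have h3 : ((C ∪ D) \ {x}).ncard = (C ∪ D).ncard - 1 := by
    have hxU : ({x} : Set α) ⊆ C ∪ D := singleton_subset_iff.mpr (Or.inl hx.1)
    rw [Set.ncard_diff hxU, Set.ncard_singleton]
  have h4 : ((C ∪ D) \ {x}).ncard ≤ J.ncard :=
    indep_ncard_le_of_basis hfin hJ hindep diff_subset
  have h5 : 2 ≤ (C ∪ D).ncard := by
    have := Set.ncard_le_ncard hyzU hfinU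
    rwa [Set.ncard_pair hzy.symm] at this
  omega


/-! ### Binary matroid lemmas -/

section Binary

variable {nd : ℕ} {φ : α → (Fin nd → ZMod 2)} {M : Matroid α} {X S T C D I : Set α} {c : α}

/-- `φ` is a GF(2)-representation of `M`. -/
def Rep (M : Matroid α) (φ : α → (Fin nd → ZMod 2)) : Prop :=
  ∀ I, I ⊆ M.E → (M.Indep I ↔ LinearIndependent (ZMod 2) (fun x : I => φ x.1))

lemma addself (v : Fin nd → ZMod 2) : v + v = 0 := by
  funext i
  show v i + v i = 0
  generalize v i = b
  fin_cases b <;> rfl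

lemma not_linind_of_sum_zero (hS : S.Finite) (hne : S.Nonempty)
    (h0 : ∑ᶠ x ∈ S, φ x = 0) :
    ¬ LinearIndependent (ZMod 2) (fun x : S => φ x.1) := by
  intro hli
  haveI := hS.fintype
  rw [Fintype.linearIndependent_iff] at hli
  obtain ⟨x0, hx0⟩ := hne
  have hsum : ∑ i : S, (1 : ZMod 2) • φ i.1 = 0 := by
    simp only [one_smul]
    rw [Finset.sum_set_coe, ← finsum_mem_eq_toFinset_sum, h0]
  have := hli (fun _ => 1) hsum ⟨x0, hx0⟩
  simp at this

lemma dep_of_sum_zero (hφ : Rep M φ) (hfin : M.E.Finite) (hS : S ⊆ M.E)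
    (hne : S.Nonempty) (h0 : ∑ᶠ x ∈ S, φ x = 0) : M.Dep S :=
  ⟨fun hI => not_linind_of_sum_zero (hfin.subset hS) hne h0 ((hφ S hS).mp hI), hS⟩

lemma circuit_sum_zero (hφ : Rep M φ) (hfin : M.E.Finite) (hC : IsCircuit M C) :
    ∑ᶠ x ∈ C, φ x = 0 := by
  classical
  have hCE := hC.subset_ground
  have hCfin := hfin.subset hCE
  haveI := hCfin.fintype
  have hdep : ¬ LinearIndependent (ZMod 2) (fun x : C => φ x.1) :=
    fun h => hC.dep.not_indep ((hφ C hCE).mpr h)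
  rw [Fintype.not_linearIndependent_iff] at hdep
  obtain ⟨g, hg0, i0, hi0⟩ := hdep
  set s : Finset C := Finset.univ.filter (fun i => g i ≠ 0) with hs
  set S' : Set α := ↑(s.image Subtype.val) with hS'
  have hS'sub : S' ⊆ C := by
    intro y hy
    simp only [hS', Finset.coe_image, mem_image] at hy
    obtain ⟨i, _, rfl⟩ := hy
    exact i.2
  have hsum : ∑ᶠ x ∈ S', φ x = 0 := by
    rw [hS', finsum_mem_coe_finset,
      Finset.sum_image (fun a _ b _ hab => Subtype.ext hab)]
    have h1 : ∀ i ∈ s, φ (i : α) = g i • φ (i : α) := by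
      intro i hi
      have hgi : g i ≠ 0 := by simpa [hs] using hi
      have : g i = 1 := by revert hgi; generalize g i = b; fin_cases b; exacts [fun h => absurd rfl h, fun _ => rfl]
      rw [this, one_smul]
    rw [Finset.sum_congr rfl h1]
    rw [Finset.sum_subset (Finset.subset_univ s) (fun i _ hi => by
      have : g i = 0 := by simpa [hs] using hi
      simp [this])]
    exact hg0
  have hne' : S'.Nonempty := ⟨(i0 : α), by
    simp only [hS', Finset.coe_image, mem_image]
    exact ⟨i0, by simp [hs, hi0], rfl⟩⟩
  have hdepS' := dep_of_sum_zero hφ hfin (hS'sub.trans hCE) hne' hsum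
  have heq : S' = C := by
    rcases hS'sub.eq_or_ssubset with h | h
    · exact h
    · exact absurd (hC.2 _ h) hdepS'.not_indep
  rw [← heq]
  exact hsum

lemma sum_sdiff_add (hDS : D ⊆ S) (hSfin : S.Finite) :
    (∑ᶠ x ∈ S \ D, φ x) + (∑ᶠ x ∈ D, φ x) = ∑ᶠ x ∈ S, φ x := by
  rw [← finsum_mem_union disjoint_sdiff_left (hSfin.diff) (hSfin.subset hDS),
    diff_union_of_subset hDS]

lemma sum_sdiff_zero (hDS : D ⊆ S) (hSfin : S.Finite)
    (h0 : ∑ᶠ x ∈ S, φ x = 0) (h0' : ∑ᶠ x ∈ D, φ x = 0) :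
    ∑ᶠ x ∈ S \ D, φ x = 0 := by
  have := sum_sdiff_add (φ := φ) hDS hSfin
  rw [h0, h0'] at this
  simpa using this

lemma ncard_inter_split (hCfin : C.Finite) (D X : Set α) :
    ((C \ D) ∩ X).ncard + ((C ∩ D) ∩ X).ncard = (C ∩ X).ncard := by
  have hdisj : Disjoint ((C \ D) ∩ X) ((C ∩ D) ∩ X) := by
    refine Set.disjoint_left.mpr ?_
    rintro y ⟨⟨-, hyD⟩, -⟩ ⟨⟨-, hyD'⟩, -⟩
    exact hyD hyD'
  have hU : ((C \ D) ∩ X) ∪ ((C ∩ D) ∩ X) = C ∩ X := by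
    rw [← union_inter_distrib_right, diff_union_inter]
  rw [← Set.ncard_union_eq hdisj ((hCfin.diff).inter_of_left _)
    ((hCfin.inter_of_left _).inter_of_left _), hU]

lemma exists_OX_of_sum_zero_aux (hφ : Rep M φ) (hfin : M.E.Finite) :
    ∀ k S, S.ncard ≤ k → S ⊆ M.E → (∑ᶠ x ∈ S, φ x = 0) → Odd ((S ∩ X).ncard) →
      ∃ C, IsOX M X C ∧ C ⊆ S := by
  intro k
  induction k with
  | zero =>
    intro S hk hS h0 hodd
    exfalso
    have hSfin := hfin.subset hS
    have h1 : (S ∩ X).ncard ≤ S.ncard := Set.ncard_le_ncard inter_subset_left hSfin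
    obtain ⟨m, hm⟩ := hodd
    omega
  | succ k IH =>
    intro S hk hS h0 hodd
    have hSfin := hfin.subset hS
    have hne : S.Nonempty := by
      have : (S ∩ X).Nonempty := Set.nonempty_of_ncard_ne_zero (by
        obtain ⟨m, hm⟩ := hodd; omega)
      exact this.mono inter_subset_left
    obtain ⟨C, hC, hCS⟩ := dep_has_circuit hfin (dep_of_sum_zero hφ hfin hS hne h0)
    by_cases hCX : Odd ((C ∩ X).ncard)
    · exact ⟨C, ⟨hC, hCX⟩, hCS⟩
    · have hCfin := hSfin.subset hCS
      have hC0 := circuit_sum_zero hφ hfin hC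
      have h0' : ∑ᶠ x ∈ S \ C, φ x = 0 := sum_sdiff_zero hCS hSfin h0 hC0
      have hcard : ((S \ C) ∩ X).ncard + ((S ∩ C) ∩ X).ncard = (S ∩ X).ncard :=
        ncard_inter_split hSfin C X
      have hSC : S ∩ C = C := inter_eq_right.mpr hCS
      rw [hSC] at hcard
      have hCev : Even ((C ∩ X).ncard) := Nat.not_odd_iff_even.mp hCX
      have hodd' : Odd (((S \ C) ∩ X).ncard) := by
        obtain ⟨m, hm⟩ := hodd
        obtain ⟨p, hp⟩ := hCev
        exact ⟨m - p, by omega⟩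
      have hklt : (S \ C).ncard ≤ k := by
        have h1 : 0 < C.ncard := (Set.ncard_pos hCfin).mpr hC.nonempty
        have h2 : (S \ C).ncard = S.ncard - C.ncard := Set.ncard_diff hCS hCfin
        have h3 : C.ncard ≤ S.ncard := Set.ncard_le_ncard hCS hSfin
        omega
      obtain ⟨C', hC', hsub⟩ := IH (S \ C) hklt ((diff_subset).trans hS) h0' hodd'
      exact ⟨C', hC', hsub.trans diff_subset⟩

lemma exists_OX_of_sum_zero (hφ : Rep M φ) (hfin : M.E.Finite) (hS : S ⊆ M.E)
    (h0 : ∑ᶠ x ∈ S, φ x = 0) (hodd : Odd ((S ∩ X).ncard)) :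
    ∃ C, IsOX M X C ∧ C ⊆ S :=
  exists_OX_of_sum_zero_aux hφ hfin S.ncard S le_rfl hS h0 hodd

lemma sum_symmdiff_zero (hφ : Rep M φ) (hfin : M.E.Finite)
    (hC : IsCircuit M C) (hD : IsCircuit M D) :
    ∑ᶠ x ∈ (C \ D) ∪ (D \ C), φ x = 0 := by
  have hCfin := hfin.subset hC.subset_ground
  have hDfin := hfin.subset hD.subset_ground
  have hC0 := circuit_sum_zero hφ hfin hC
  have hD0 := circuit_sum_zero hφ hfin hD
  have e1 : C \ (C ∩ D) = C \ D := by ext y; simp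
  have e2 : D \ (C ∩ D) = D \ C := by ext y; simp
  have h1 : (∑ᶠ x ∈ C \ D, φ x) + (∑ᶠ x ∈ C ∩ D, φ x) = 0 := by
    rw [← e1, sum_sdiff_add inter_subset_left hCfin, hC0]
  have h2 : (∑ᶠ x ∈ D \ C, φ x) + (∑ᶠ x ∈ C ∩ D, φ x) = 0 := by
    rw [← e2, sum_sdiff_add (inter_subset_right) hDfin, hD0]
  rw [finsum_mem_union disjoint_sdiff_sdiff (hCfin.diff) (hDfin.diff)]
  have key : ∀ u v w : Fin nd → ZMod 2, u + w = 0 → v + w = 0 → u + v = 0 := by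
    intro u v w hu1 hv1
    rw [eq_neg_of_add_eq_zero_left hu1, eq_neg_of_add_eq_zero_left hv1, ← neg_add,
      addself w, neg_zero]
  exact key _ _ _ h1 h2

lemma circuit_eq_of_subset_insert_indep (hφ : Rep M φ) (hfin : M.E.Finite)
    (hI : M.Indep I) (hC : IsCircuit M C) (hD : IsCircuit M D)
    (hCsub : C ⊆ insert c I) (hDsub : D ⊆ insert c I) : C = D := by
  by_contra hne
  have hcC : c ∈ C := by
    by_contra h
    exact hC.not_subset_indep hI (fun z hz => ((hCsub hz).resolve_left (by
      rintro rfl; exact h hz)))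
  have hcD : c ∈ D := by
    by_contra h
    exact hD.not_subset_indep hI (fun z hz => ((hDsub hz).resolve_left (by
      rintro rfl; exact h hz)))
  set Δ := (C \ D) ∪ (D \ C) with hΔ
  have hΔI : Δ ⊆ I := by
    rintro y (⟨hyC, hyD⟩ | ⟨hyD, hyC⟩)
    · exact (hCsub hyC).resolve_left (by rintro rfl; exact hyD hcD)
    · exact (hDsub hyD).resolve_left (by rintro rfl; exact hyC hcC)
  have hΔne : Δ.Nonempty := by
    rw [nonempty_iff_ne_empty]
    intro h
    apply hne
    rw [union_empty_iff] at h
    exact Subset.antisymm (diff_eq_empty.mp h.1) (diff_eq_empty.mp h.2)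
  have h0 := sum_symmdiff_zero hφ hfin hC hD
  exact (dep_of_sum_zero hφ hfin (hΔI.trans hI.subset_ground) hΔne h0).not_indep
    (hI.subset hΔI)

end Binary


/-! ### Structure of the es-splitting matroid -/

section Split

variable {M M' : Matroid α} {X : Set α} {e a γ : α} {nd : ℕ} {φ : α → Fin nd → ZMod 2}
variable {A C D I J K S : Set α} {c x : α}

lemma IsESSplit.ground_finite (hsplit : IsESSplit M M' X e a γ) (hfin : M.E.Finite) :
    M'.E.Finite := by
  rw [hsplit.1]
  exact hfin.union ((Set.finite_singleton γ).insert a)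

lemma IsESSplit.subset_ground' (hsplit : IsESSplit M M' X e a γ) (hS : S ⊆ M.E ∪ {γ}) :
    S ⊆ M'.E := by
  rw [hsplit.1]
  intro y hy
  rcases hS hy with h | h
  · exact Or.inl h
  · exact Or.inr (Or.inr h)

lemma EX_circuit' (hsplit : IsESSplit M M' X e a γ) (h : IsEX M X C) :
    IsCircuit M' C :=
  (hsplit.2 C).mpr (Or.inr (Or.inl h))

lemma OX_mem_gamma_circuit' (hsplit : IsESSplit M M' X e a γ) (h : IsOX M X C)
    (he : e ∈ C) : IsCircuit M' ((C \ {e}) ∪ {γ}) :=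
  (hsplit.2 _).mpr (Or.inr (Or.inr (Or.inr (Or.inr (Or.inr (Or.inl ⟨C, h, he, rfl⟩))))))

lemma OX_nmem_gamma_circuit' (hsplit : IsESSplit M M' X e a γ) (h : IsOX M X C)
    (he : e ∉ C) : IsCircuit M' (C ∪ {e, γ}) :=
  (hsplit.2 _).mpr (Or.inr (Or.inr (Or.inr (Or.inr (Or.inl ⟨C, h, he, rfl⟩)))))

lemma circuit'_subset_E_cases (hsplit : IsESSplit M M' X e a γ)
    (haE : a ∉ M.E) (hγE : γ ∉ M.E)
    (hC : IsCircuit M' C) (hCE : C ⊆ M.E) : IsEX M X C ∨ OXUnion M X C := by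
  rcases (hsplit.2 C).mp hC with h | h | h | h | h | h | h
  · exact absurd (hCE (by rw [h]; right; left; rfl)) haE
  · exact Or.inl h
  · exact Or.inr h.1
  · obtain ⟨C₀, -, rfl⟩ := h
    exact absurd (hCE (Or.inr rfl)) haE
  · obtain ⟨C₀, -, -, rfl⟩ := h
    exact absurd (hCE (Or.inr (Or.inr rfl))) hγE
  · obtain ⟨C₀, -, -, rfl⟩ := h
    exact absurd (hCE (Or.inr rfl)) hγE
  · obtain ⟨C₀, -, -, -, rfl⟩ := h
    exact absurd (hCE (Or.inr (Or.inl rfl))) haE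

lemma circuit'_gamma_cases (hsplit : IsESSplit M M' X e a γ)
    (haE : a ∉ M.E) (hγE : γ ∉ M.E) (haγ : a ≠ γ)
    (hC : IsCircuit M' C) (hCE : C ⊆ M.E ∪ {γ}) (hγC : γ ∈ C) :
    (∃ C₀, IsOX M X C₀ ∧ e ∉ C₀ ∧ C = C₀ ∪ {e, γ}) ∨
    (∃ C₀, IsOX M X C₀ ∧ e ∈ C₀ ∧ C = (C₀ \ {e}) ∪ {γ}) := by
  have haC : a ∉ C := by
    intro haC
    rcases hCE haC with h | h
    · exact haE h
    · exact haγ h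
  rcases (hsplit.2 C).mp hC with h | h | h | h | h | h | h
  · exact absurd (by rw [h]; right; left; rfl) haC
  · exact absurd (h.1.subset_ground hγC) hγE
  · exact absurd hγC (by
      obtain ⟨⟨C₁, C₂, h₁, h₂, -, rfl, -⟩, -⟩ := h
      rintro (hy | hy)
      · exact hγE (h₁.1.subset_ground hy)
      · exact hγE (h₂.1.subset_ground hy))
  · obtain ⟨C₀, -, rfl⟩ := h
    exact absurd (Or.inr rfl) haC
  · exact Or.inl h
  · exact Or.inr h
  · obtain ⟨C₀, -, -, -, rfl⟩ := h
    exact absurd (Or.inr (Or.inl rfl)) haC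

lemma indep'_of_indep (hsplit : IsESSplit M M' X e a γ)
    (haE : a ∉ M.E) (hγE : γ ∉ M.E) (hfin : M.E.Finite)
    (hI : M.Indep I) : M'.Indep I := by
  refine indep_of_no_circuit (hsplit.ground_finite hfin)
    (hsplit.subset_ground' (hI.subset_ground.trans subset_union_left)) ?_
  intro C hC hCI
  have hCE : C ⊆ M.E := hCI.trans hI.subset_ground
  rcases circuit'_subset_E_cases hsplit haE hγE hC hCE with h | h
  · exact h.1.not_subset_indep hI hCI
  · obtain ⟨C₁, C₂, h₁, -, -, rfl, -⟩ := h
    exact h₁.1.not_subset_indep hI ((subset_union_left).trans hCI)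

lemma exists_min_OXUnion (hfin : M.E.Finite) (hU : OXUnion M X S) :
    ∃ C, OXUnion M X C ∧ C ⊆ S ∧ ∀ D, OXUnion M X D → D ⊆ C → D = C := by
  classical
  have hSE : S ⊆ M.E := by
    obtain ⟨C₁, C₂, h₁, h₂, -, rfl, -⟩ := hU
    exact union_subset h₁.1.subset_ground h₂.1.subset_ground
  have hSfin := hfin.subset hSE
  have hex : ∃ n, ∃ C, C ⊆ S ∧ OXUnion M X C ∧ C.ncard = n := ⟨S.ncard, S, Subset.rfl, hU, rfl⟩
  obtain ⟨C, hCS, hCU, hCn⟩ := Nat.find_spec hex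
  refine ⟨C, hCU, hCS, fun D hD hDC => ?_⟩
  have h1 : Nat.find hex ≤ D.ncard := Nat.find_min' hex ⟨D, hDC.trans hCS, hD, rfl⟩
  exact (Set.eq_of_subset_of_ncard_le hDC (by omega) (hSfin.subset hCS)).symm ▸ rfl

lemma dep'_of_two_circuits (hsplit : IsESSplit M M' X e a γ)
    (hφ : Rep M φ) (hfin : M.E.Finite)
    (hC : IsCircuit M C) (hD : IsCircuit M D) (hne : C ≠ D)
    (hCS : C ⊆ S) (hDS : D ⊆ S) (hSE : S ⊆ M.E) : M'.Dep S := by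
  have hSE' : S ⊆ M'.E := hsplit.subset_ground' (hSE.trans subset_union_left)
  by_cases hEX : ∃ C₀, IsEX M X C₀ ∧ C₀ ⊆ S
  · obtain ⟨C₀, hC₀, hC₀S⟩ := hEX
    exact (EX_circuit' hsplit hC₀).dep.superset hC₀S hSE'
  · have hOX : ∀ D', IsCircuit M D' → D' ⊆ S → Odd ((D' ∩ X).ncard) := by
      intro D' hD' hD'S
      rcases Nat.even_or_odd ((D' ∩ X).ncard) with h | h
      · exact absurd ⟨D', ⟨hD', h⟩, hD'S⟩ hEX
      · exact h
    -- find two disjoint OX circuits in S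
    have key : ∃ D₁ D₂, IsOX M X D₁ ∧ IsOX M X D₂ ∧ Disjoint D₁ D₂ ∧ D₁ ⊆ S ∧ D₂ ⊆ S := by
      by_cases hdis : Disjoint C D
      · exact ⟨C, D, ⟨hC, hOX C hC hCS⟩, ⟨hD, hOX D hD hDS⟩, hdis, hCS, hDS⟩
      · set Δ := (C \ D) ∪ (D \ C) with hΔdef
        have hΔS : Δ ⊆ S := union_subset ((diff_subset).trans hCS) ((diff_subset).trans hDS)
        have hΔ0 := sum_symmdiff_zero hφ hfin hC hD
        have hΔne : Δ.Nonempty := by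
          rw [nonempty_iff_ne_empty]
          intro h
          rw [union_empty_iff] at h
          exact hne (Subset.antisymm (diff_eq_empty.mp h.1) (diff_eq_empty.mp h.2))
        obtain ⟨D₁, hD₁, hD₁Δ⟩ :=
          dep_has_circuit hfin (dep_of_sum_zero hφ hfin (hΔS.trans hSE) hΔne hΔ0)
        have hD₁OX : Odd ((D₁ ∩ X).ncard) := hOX D₁ hD₁ (hD₁Δ.trans hΔS)
        have hΔfin : Δ.Finite := hfin.subset (hΔS.trans hSE)
        have hCfin := hfin.subset hC.subset_ground
        have hDfin := hfin.subset hD.subset_ground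
        -- parity of Δ ∩ X is even
        have hpar : Even ((Δ ∩ X).ncard) := by
          have e1 := ncard_inter_split hCfin D X
          have e2 := ncard_inter_split hDfin C X
          have e3 : (Δ ∩ X).ncard = ((C \ D) ∩ X).ncard + ((D \ C) ∩ X).ncard := by
            rw [hΔdef, union_inter_distrib_right]
            exact Set.ncard_union_eq (by
                refine Set.disjoint_left.mpr ?_
                rintro y ⟨⟨hyC, hyD⟩, -⟩ ⟨⟨hyD', -⟩, -⟩
                exact hyD hyD')
              ((hCfin.diff).inter_of_left _) ((hDfin.diff).inter_of_left _)
          obtain ⟨m₁, hm₁⟩ := hOX C hC hCS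
          obtain ⟨m₂, hm₂⟩ := hOX D hD hDS
          have e4 : (D ∩ C) ∩ X = (C ∩ D) ∩ X := by rw [inter_comm D C]
          rw [e4] at e2
          exact Nat.even_iff.mpr (by omega)
        have h0' : ∑ᶠ x ∈ Δ \ D₁, φ x = 0 :=
          sum_sdiff_zero hD₁Δ hΔfin hΔ0 (circuit_sum_zero hφ hfin hD₁)
        have hodd' : Odd (((Δ \ D₁) ∩ X).ncard) := by
          have e5 := ncard_inter_split hΔfin D₁ X
          have e6 : (Δ ∩ D₁) ∩ X = D₁ ∩ X := by
            rw [inter_eq_right.mpr hD₁Δ]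
          rw [e6] at e5
          obtain ⟨m₁, hm₁⟩ := hD₁OX
          obtain ⟨m₂, hm₂⟩ := hpar
          exact Nat.odd_iff.mpr (by omega)
        obtain ⟨D₂, hD₂, hD₂Δ⟩ := exists_OX_of_sum_zero hφ hfin
          (((diff_subset).trans hΔS).trans hSE) h0' hodd'
        refine ⟨D₁, D₂, ⟨hD₁, hD₁OX⟩, hD₂, ?_, hD₁Δ.trans hΔS, (hD₂Δ.trans diff_subset).trans hΔS⟩
        exact Set.disjoint_left.mpr (fun y hy1 hy2 => (hD₂Δ hy2).2 hy1)
    obtain ⟨D₁, D₂, h₁, h₂, hdis, h₁S, h₂S⟩ := key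
    have hUn : OXUnion M X (D₁ ∪ D₂) :=
      ⟨D₁, D₂, h₁, h₂, hdis, rfl, fun ⟨C₀, hC₀, hC₀sub⟩ =>
        hEX ⟨C₀, hC₀, hC₀sub.trans (union_subset h₁S h₂S)⟩⟩
    obtain ⟨Cm, hCm, hCmsub, hCmmin⟩ := exists_min_OXUnion hfin hUn
    have : IsCircuit M' Cm := (hsplit.2 Cm).mpr (Or.inr (Or.inr (Or.inl ⟨hCm, hCmmin⟩)))
    exact this.dep.superset (hCmsub.trans (union_subset h₁S h₂S)) hSE'

end Split



section Split2

variable {M M' : Matroid α} {X : Set α} {e a γ : α} {nd : ℕ} {φ : α → Fin nd → ZMod 2}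
variable {A C D I J K S : Set α} {c x : α}

lemma indep'_unique_OX (hsplit : IsESSplit M M' X e a γ)
    (haE : a ∉ M.E) (hγE : γ ∉ M.E) (hfin : M.E.Finite)
    (hSE : S ⊆ M.E) (hC : IsCircuit M C) (hCS : C ⊆ S) (hCX : Odd ((C ∩ X).ncard))
    (huniq : ∀ D, IsCircuit M D → D ⊆ S → D = C) : M'.Indep S := by
  refine indep_of_no_circuit (hsplit.ground_finite hfin)
    (hsplit.subset_ground' (hSE.trans subset_union_left)) ?_
  intro C' hC' hC'S
  rcases circuit'_subset_E_cases hsplit haE hγE hC' (hC'S.trans hSE) with h | h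
  · have := huniq C' h.1 hC'S
    rw [this] at h
    exact (Nat.not_odd_iff_even.mpr h.2) hCX
  · obtain ⟨C₁, C₂, h₁, h₂, hdis, rfl, -⟩ := h
    have e₁ : C₁ = C := huniq C₁ h₁.1 ((subset_union_left).trans hC'S)
    have e₂ : C₂ = C := huniq C₂ h₂.1 ((subset_union_right).trans hC'S)
    rw [e₁, e₂] at hdis
    exact (hC.nonempty.ne_empty) (disjoint_self.mp hdis)

lemma exists_unique_circuit_of_indep' (hsplit : IsESSplit M M' X e a γ)
    (hφ : Rep M φ) (hfin : M.E.Finite)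
    (hJE : J ⊆ M.E) (hJ' : M'.Indep J) (hJdep : M.Dep J) :
    ∃ C, IsCircuit M C ∧ C ⊆ J ∧ Odd ((C ∩ X).ncard) ∧
      ∀ D, IsCircuit M D → D ⊆ J → D = C := by
  obtain ⟨C, hC, hCJ⟩ := dep_has_circuit hfin hJdep
  have huniq : ∀ D, IsCircuit M D → D ⊆ J → D = C := by
    intro D hD hDJ
    by_contra hne
    exact (dep'_of_two_circuits hsplit hφ hfin hD hC hne hDJ hCJ hJE).not_indep hJ'
  have hOX : Odd ((C ∩ X).ncard) := by
    rcases Nat.even_or_odd ((C ∩ X).ncard) with h | h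
    · exact absurd hJ' ((EX_circuit' hsplit ⟨hC, h⟩).dep.superset hCJ
        (hsplit.subset_ground' (hJE.trans subset_union_left))).not_indep
    · exact h
  exact ⟨C, hC, hCJ, hOX, huniq⟩

lemma ncard_le_of_indep' (hsplit : IsESSplit M M' X e a γ)
    (hφ : Rep M φ) (hfin : M.E.Finite)
    (hJ' : M'.Indep J) (hJA : J ⊆ A) (hAE : A ⊆ M.E) (hI : M.IsBasis I A) :
    J.ncard ≤ I.ncard + 1 := by
  by_cases hJi : M.Indep J
  · exact (indep_ncard_le_of_basis hfin hI hJi hJA).trans (Nat.le_succ _)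
  · have hJdep : M.Dep J := (Matroid.not_indep_iff (hJA.trans hAE)).mp hJi
    obtain ⟨C, hC, hCJ, -, huniq⟩ :=
      exists_unique_circuit_of_indep' hsplit hφ hfin (hJA.trans hAE) hJ' hJdep
    obtain ⟨c, hc⟩ := hC.nonempty
    have hJc : M.Indep (J \ {c}) := by
      refine indep_of_no_circuit hfin ((diff_subset).trans (hJA.trans hAE)) ?_
      intro D hD hDJ
      have := huniq D hD (hDJ.trans diff_subset)
      rw [this] at hDJ
      exact (hDJ hc).2 rfl
    have h1 : (J \ {c}).ncard ≤ I.ncard :=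
      indep_ncard_le_of_basis hfin hI hJc ((diff_subset).trans hJA)
    have hJfin : J.Finite := (hfin.subset (hJA.trans hAE))
    have h2 : (J \ {c}).ncard = J.ncard - 1 := by
      rw [Set.ncard_diff (singleton_subset_iff.mpr (hCJ hc)), Set.ncard_singleton]
    have h3 : 1 ≤ J.ncard := (Set.ncard_pos hJfin).mpr ⟨c, hCJ hc⟩
    omega

lemma M_indep_of_indep'_no_OX (hsplit : IsESSplit M M' X e a γ)
    (hφ : Rep M φ) (hfin : M.E.Finite)
    (hnoOX : ¬ ∃ C, IsOX M X C ∧ C ⊆ A)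
    (hJ' : M'.Indep J) (hJA : J ⊆ A) (hAE : A ⊆ M.E) : M.Indep J := by
  by_contra hJi
  have hJdep : M.Dep J := (Matroid.not_indep_iff (hJA.trans hAE)).mp hJi
  obtain ⟨C, hC, hCJ, hOX, -⟩ :=
    exists_unique_circuit_of_indep' hsplit hφ hfin (hJA.trans hAE) hJ' hJdep
  exact hnoOX ⟨C, ⟨hC, hOX⟩, hCJ.trans hJA⟩

lemma dep'_gamma_of_OX_mem (hsplit : IsESSplit M M' X e a γ)
    (hC : IsOX M X C) (he : e ∈ C) (hsub : C \ {e} ⊆ J) (hJE : J ⊆ M.E) :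
    M'.Dep (J ∪ {γ}) := by
  refine ((OX_mem_gamma_circuit' hsplit hC he).dep.superset ?_ ?_)
  · exact union_subset_union hsub Subset.rfl
  · exact hsplit.subset_ground' (union_subset_union hJE Subset.rfl)

lemma dep'_gamma_of_OX_subset (hsplit : IsESSplit M M' X e a γ)
    (hC : IsOX M X C) (hCJ : C ⊆ J) (heJ : e ∈ J) (hJE : J ⊆ M.E) :
    M'.Dep (J ∪ {γ}) := by
  by_cases he : e ∈ C
  · exact dep'_gamma_of_OX_mem hsplit hC he ((diff_subset).trans hCJ) hJE
  · refine ((OX_nmem_gamma_circuit' hsplit hC he).dep.superset ?_ ?_)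
    · rintro y (hy | hy | hy)
      · exact Or.inl (hCJ hy)
      · exact Or.inl (hy ▸ heJ)
      · exact Or.inr hy
    · exact hsplit.subset_ground' (union_subset_union hJE Subset.rfl)

lemma indep'_gamma_of_no_OX (hsplit : IsESSplit M M' X e a γ)
    (haE : a ∉ M.E) (hγE : γ ∉ M.E) (haγ : a ≠ γ) (hfin : M.E.Finite)
    (hnoQ : ¬ ∃ C, IsOX M X C ∧ C ⊆ A ∪ {e}) (heE : e ∈ M.E)
    (hJ' : M'.Indep J) (hJA : J ⊆ A) (hAE : A ⊆ M.E) : M'.Indep (J ∪ {γ}) := by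
  refine indep_of_no_circuit (hsplit.ground_finite hfin)
    (hsplit.subset_ground' (union_subset_union (hJA.trans hAE) Subset.rfl)) ?_
  intro C' hC' hC'sub
  by_cases hγC : γ ∈ C'
  · have hC'E : C' ⊆ M.E ∪ {γ} :=
      hC'sub.trans (union_subset_union (hJA.trans hAE) Subset.rfl)
    rcases circuit'_gamma_cases hsplit haE hγE haγ hC' hC'E hγC with
      ⟨C₀, hC₀, heC₀, rfl⟩ | ⟨C₀, hC₀, heC₀, rfl⟩
    · refine hnoQ ⟨C₀, hC₀, ?_⟩
      intro y hy
      have : y ∈ J ∪ {γ} := hC'sub (Or.inl hy)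
      rcases this with h | h
      · exact Or.inl (hJA h)
      · exact absurd (h ▸ (hC₀.1.subset_ground hy)) hγE
    · refine hnoQ ⟨C₀, hC₀, ?_⟩
      intro y hy
      by_cases hye : y = e
      · exact Or.inr hye
      · have : y ∈ J ∪ {γ} := hC'sub (Or.inl ⟨hy, hye⟩)
        rcases this with h | h
        · exact Or.inl (hJA h)
        · exact absurd (h ▸ (hC₀.1.subset_ground hy)) hγE
  · have hC'J : C' ⊆ J := by
      intro y hy
      rcases hC'sub hy with h | h
      · exact h
      · exact absurd (h ▸ hy) hγC
    exact hC'.not_subset_indep hJ' hC'J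

lemma mem_closure_diff_of_circuit (hC : IsCircuit M C) (he : x ∈ C) :
    x ∈ M.closure (C \ {x}) := by
  have hind : M.Indep (C \ {x}) := hC.2 _ (sdiff_singleton_ssubset.mpr he)
  have hdep : M.Dep (insert x (C \ {x})) := by
    rw [insert_diff_singleton, insert_eq_of_mem he]
    exact hC.dep
  exact (hind.insert_dep_iff.mp hdep).1

lemma basis_of_indep_ncard (hfin : M.E.Finite) (hJ : M.Indep J) (hJA : J ⊆ A)
    (hI : M.IsBasis I A) (hcard : I.ncard ≤ J.ncard) : M.IsBasis J A := by
  obtain ⟨J', hJ', hJJ'⟩ := hJ.subset_isBasis_of_subset hJA hI.subset_ground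
  have h1 : J'.ncard ≤ I.ncard := indep_ncard_le_of_basis hfin hI hJ'.indep hJ'.subset
  have : J = J' := Set.eq_of_subset_of_ncard_le hJJ' (by omega)
    (hfin.subset hJ'.indep.subset_ground)
  rw [this]
  exact hJ'

lemma exists_indep'_insert (hsplit : IsESSplit M M' X e a γ)
    (haE : a ∉ M.E) (hγE : γ ∉ M.E) (hφ : Rep M φ) (hfin : M.E.Finite)
    (hAE : A ⊆ M.E) (hC : IsOX M X C) (hCA : C ⊆ A) (hI : M.IsBasis I A) :
    ∃ K, M'.Indep K ∧ K ⊆ A ∧ K.ncard = I.ncard + 1 ∧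
      ∀ D, IsCircuit M D → D ⊆ K → D = C := by
  obtain ⟨c, hc⟩ := hC.1.nonempty
  have hCc : M.Indep (C \ {c}) := hC.1.2 _ (sdiff_singleton_ssubset.mpr hc)
  obtain ⟨I', hI', hsub⟩ := hCc.subset_isBasis_of_subset ((diff_subset).trans hCA) hAE
  have hcI' : c ∉ I' := by
    intro hcI'
    refine hC.1.not_subset_indep hI'.indep ?_
    intro y hy
    by_cases hyc : y = c
    · exact hyc ▸ hcI'
    · exact hsub ⟨hy, hyc⟩
  have hCK : C ⊆ insert c I' := by
    intro y hy
    by_cases hyc : y = c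
    · exact hyc ▸ mem_insert c I'
    · exact mem_insert_of_mem _ (hsub ⟨hy, hyc⟩)
  have huniq : ∀ D, IsCircuit M D → D ⊆ insert c I' → D = C := by
    intro D hD hDsub
    exact circuit_eq_of_subset_insert_indep hφ hfin hI'.indep hD hC.1 hDsub hCK
  have hKA : insert c I' ⊆ A := insert_subset (hCA hc) hI'.subset
  have hKi : M'.Indep (insert c I') :=
    indep'_unique_OX hsplit haE hγE hfin (hKA.trans hAE) hC.1 hCK hC.2 huniq
  have hIcard : I'.ncard = I.ncard := by
    have h1 := indep_ncard_le_of_basis hfin hI hI'.indep hI'.subset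
    have h2 := indep_ncard_le_of_basis hfin hI' hI.indep hI.subset
    omega
  refine ⟨insert c I', hKi, hKA, ?_, huniq⟩
  rw [Set.ncard_insert_of_notMem hcI' (hfin.subset (hI'.subset.trans hAE)), hIcard]

end Split2


lemma gamma_split {A K : Set α} {γ : α} (hAfin : A.Finite) (hKsub : K ⊆ A ∪ {γ}) :
    K \ {γ} ⊆ A ∧ K.ncard ≤ (K \ {γ}).ncard + 1 ∧ (γ ∈ K → K = (K \ {γ}) ∪ {γ}) := by
  have h1 : K \ {γ} ⊆ A := by
    rintro y ⟨hy, hyγ⟩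
    rcases hKsub hy with h | h
    · exact h
    · exact absurd h hyγ
  have hKfin : K.Finite := (hAfin.union (finite_singleton γ)).subset hKsub
  refine ⟨h1, ?_, ?_⟩
  · have h2 : K ⊆ insert γ (K \ {γ}) := by
      intro y hy
      by_cases hyγ : y = γ
      · exact Or.inl hyγ
      · exact Or.inr ⟨hy, hyγ⟩
    exact (Set.ncard_le_ncard h2 ((hKfin.diff).insert γ)).trans (Set.ncard_insert_le _ _)
  · intro hγK
    rw [union_singleton, insert_diff_singleton, insert_eq_of_mem hγK]


end ESSplit

open ESSplit

theorem rank_union_gamma_es_splitting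
    {α : Type*} (M M' : Matroid α) (X : Set α) (e a γ : α)
    (hfin : M.E.Finite) (hbin : IsBinary M)
    (hXE : X ⊆ M.E) (heX : e ∈ X) (haE : a ∉ M.E) (hγE : γ ∉ M.E) (haγ : a ≠ γ)
    (hsplit : IsESSplit M M' X e a γ)
    (A : Set α) (hAE : A ⊆ M.E) :
    (((¬ ∃ C, IsOX M X C ∧ C ⊆ A) ∧ (∃ C, IsOX M X C ∧ C ⊆ A ∪ {e})) →
      rk M' (A ∪ {γ}) = rk M A) ∧
    (((∃ C, IsOX M X C ∧ C ⊆ A) ∧ e ∉ M.closure A) →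
      rk M' (A ∪ {γ}) = rk M A + 2) ∧
    ((¬ (((¬ ∃ C, IsOX M X C ∧ C ⊆ A) ∧ (∃ C, IsOX M X C ∧ C ⊆ A ∪ {e})) ∨
        ((∃ C, IsOX M X C ∧ C ⊆ A) ∧ e ∉ M.closure A))) →
      rk M' (A ∪ {γ}) = rk M A + 1) := by
  obtain ⟨nd, φ, hφ⟩ := hbin
  have hφ : Rep M φ := hφ
  have heE : e ∈ M.E := hXE heX
  obtain ⟨I, hI⟩ := M.exists_isBasis A hAE
  have hrA : rk M A = I.ncard := rk_eq_ncard_of_basis hfin hI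
  have hAfin : A.Finite := hfin.subset hAE
  have hIfin : I.Finite := hAfin.subset hI.subset
  have hγA : γ ∉ A := fun h => hγE (hAE h)
  have hγI : γ ∉ I := fun h => hγA (hI.subset h)
  refine ⟨?_, ?_, ?_⟩
  · -- Case 1
    rintro ⟨hP, ⟨C, hCOX, hCsub⟩⟩
    rw [hrA]
    have heC : e ∈ C := by
      by_contra h
      refine hP ⟨C, hCOX, fun y hy => ?_⟩
      rcases hCsub hy with h' | h'
      · exact h'
      · exact absurd (h' ▸ hy) h
    have heA : e ∉ A := by
      intro heA
      exact hP ⟨C, hCOX, hCsub.trans (union_subset Subset.rfl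
        (singleton_subset_iff.mpr heA))⟩
    refine rk_eq_of_forall ⟨I, indep'_of_indep hsplit haE hγE hfin hI.indep,
      hI.subset.trans subset_union_left, rfl⟩ ?_
    intro K hK hKsub
    obtain ⟨hJA, hKcard, hKeq⟩ := gamma_split hAfin hKsub
    set J := K \ {γ} with hJdef
    have hJ' : M'.Indep J := hK.subset diff_subset
    have hJ : M.Indep J := M_indep_of_indep'_no_OX hsplit hφ hfin hP hJ' hJA hAE
    have hJr : J.ncard ≤ I.ncard := indep_ncard_le_of_basis hfin hI hJ hJA
    by_cases hγK : γ ∈ K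
    · have hKJ : K = J ∪ {γ} := hKeq hγK
      suffices hlt : J.ncard < I.ncard by omega
      rcases lt_or_eq_of_le hJr with h | h
      · exact h
      exfalso
      have hJbasis : M.IsBasis J A := basis_of_indep_ncard hfin hJ hJA hI h.ge
      have heJ : e ∉ J := fun hh => heA (hJA hh)
      have hCA : C \ {e} ⊆ A := by
        rintro y ⟨hy, hye⟩
        rcases hCsub hy with h' | h'
        · exact h'
        · exact absurd h' hye
      have hecl : e ∈ M.closure J := by
        have h1 : e ∈ M.closure (C \ {e}) := mem_closure_diff_of_circuit hCOX.1 heC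
        have h2 := M.closure_subset_closure hCA h1
        rwa [← hJbasis.closure_eq_closure] at h2
      obtain ⟨C₀, hC₀, heC₀, hC₀sub⟩ := fund_circuit hfin hJ hecl heJ
      have hC₀X : Odd ((C₀ ∩ X).ncard) := by
        by_contra hev
        have hev : Even ((C₀ ∩ X).ncard) := Nat.not_odd_iff_even.mp hev
        have hΔA : (C \ C₀) ∪ (C₀ \ C) ⊆ A := by
          rintro y (⟨hyC, hyC₀⟩ | ⟨hyC₀, hyC⟩)
          · rcases hCsub hyC with h' | h'
            · exact h'
            · exact absurd (h' ▸ heC₀) (h' ▸ hyC₀)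
          · rcases hC₀sub hyC₀ with h' | h'
            · exact absurd (h' ▸ heC) (h' ▸ hyC)
            · exact hJA h'
        have hΔ0 := sum_symmdiff_zero hφ hfin hCOX.1 hC₀
        have hCfin := hfin.subset hCOX.1.subset_ground
        have hC₀fin := hfin.subset hC₀.subset_ground
        have hodd : Odd ((((C \ C₀) ∪ (C₀ \ C)) ∩ X).ncard) := by
          have e1 := ncard_inter_split hCfin C₀ X
          have e2 := ncard_inter_split hC₀fin C X
          have e3 : (((C \ C₀) ∪ (C₀ \ C)) ∩ X).ncard
              = ((C \ C₀) ∩ X).ncard + ((C₀ \ C) ∩ X).ncard := by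
            rw [union_inter_distrib_right]
            exact Set.ncard_union_eq (by
                refine Set.disjoint_left.mpr ?_
                rintro y ⟨⟨hy1, hy2⟩, -⟩ ⟨⟨hy3, -⟩, -⟩
                exact hy2 hy3)
              ((hCfin.diff).inter_of_left _) ((hC₀fin.diff).inter_of_left _)
          have e4 : (C₀ ∩ C) ∩ X = (C ∩ C₀) ∩ X := by rw [inter_comm C₀ C]
          rw [e4] at e2
          obtain ⟨m₁, hm₁⟩ := hCOX.2
          obtain ⟨m₂, hm₂⟩ := hev
          exact Nat.odd_iff.mpr (by omega)
        obtain ⟨D, hD, hDsub⟩ := exists_OX_of_sum_zero hφ hfin (hΔA.trans hAE) hΔ0 hodd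
        exact hP ⟨D, hD, hDsub.trans hΔA⟩
      have hC₀J : C₀ \ {e} ⊆ J := by
        rintro y ⟨hy, hye⟩
        rcases hC₀sub hy with h' | h'
        · exact absurd h' hye
        · exact h'
      have hdep := dep'_gamma_of_OX_mem hsplit ⟨hC₀, hC₀X⟩ heC₀ hC₀J (hJA.trans hAE)
      rw [← hKJ] at hdep
      exact hdep.not_indep hK
    · have : K = J := by rw [hJdef, diff_singleton_eq_self hγK]
      rw [this]
      exact hJr
  · -- Case 2
    rintro ⟨⟨C, hCOX, hCA⟩, heR⟩
    rw [hrA]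
    have heA : e ∉ A := fun h => heR (M.mem_closure_of_mem h hAE)
    obtain ⟨K, hKi, hKA, hKcard, huniq⟩ :=
      exists_indep'_insert hsplit haE hγE hφ hfin hAE hCOX hCA hI
    have hγK : γ ∉ K := fun h => hγA (hKA h)
    have hKfin : K.Finite := hAfin.subset hKA
    refine rk_eq_of_forall ⟨K ∪ {γ}, ?_, union_subset_union hKA Subset.rfl, ?_⟩ ?_
    · refine indep_of_no_circuit (hsplit.ground_finite hfin)
        (hsplit.subset_ground' (union_subset_union (hKA.trans hAE) Subset.rfl)) ?_
      intro C' hC' hC'sub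
      by_cases hγC : γ ∈ C'
      · rcases circuit'_gamma_cases hsplit haE hγE haγ hC'
          (hC'sub.trans (union_subset_union (hKA.trans hAE) Subset.rfl)) hγC with
          ⟨C₀, hC₀, heC₀, rfl⟩ | ⟨C₀, hC₀, heC₀, rfl⟩
        · have : e ∈ K ∪ {γ} := hC'sub (Or.inr (Or.inl rfl))
          rcases this with h | h
          · exact heA (hKA h)
          · exact hγE (h ▸ heE)
        · have hC₀A : C₀ \ {e} ⊆ A := by
            rintro y ⟨hy, hye⟩
            have : y ∈ K ∪ {γ} := hC'sub (Or.inl ⟨hy, hye⟩)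
            rcases this with h | h
            · exact hKA h
            · exact absurd (h ▸ (hC₀.1.subset_ground hy)) hγE
          have := M.closure_subset_closure hC₀A
            (mem_closure_diff_of_circuit hC₀.1 heC₀)
          exact heR this
      · have hC'K : C' ⊆ K := by
          intro y hy
          rcases hC'sub hy with h | h
          · exact h
          · exact absurd (h ▸ hy) hγC
        exact hC'.not_subset_indep hKi hC'K
    · rw [union_singleton, Set.ncard_insert_of_notMem hγK hKfin, hKcard]
    · intro K' hK' hK'sub
      obtain ⟨hJA, hKcard', hKeq⟩ := gamma_split hAfin hK'sub
      have hJ' : M'.Indep (K' \ {γ}) := hK'.subset diff_subset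
      have := ncard_le_of_indep' hsplit hφ hfin hJ' hJA hAE hI
      omega
  · -- Case 3
    intro h3
    rw [hrA]
    by_cases hP : ∃ C, IsOX M X C ∧ C ⊆ A
    · have hR : e ∈ M.closure A := by
        by_contra hR
        exact h3 (Or.inr ⟨hP, hR⟩)
      obtain ⟨C, hCOX, hCA⟩ := hP
      obtain ⟨K, hKi, hKA, hKcard, -⟩ :=
        exists_indep'_insert hsplit haE hγE hφ hfin hAE hCOX hCA hI
      refine rk_eq_of_forall ⟨K, hKi, hKA.trans subset_union_left, hKcard⟩ ?_
      intro K' hK' hK'sub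
      obtain ⟨hJA, hKcard', hKeq⟩ := gamma_split hAfin hK'sub
      set J := K' \ {γ} with hJdef
      have hJ' : M'.Indep J := hK'.subset diff_subset
      have hJb : J.ncard ≤ I.ncard + 1 := ncard_le_of_indep' hsplit hφ hfin hJ' hJA hAE hI
      by_cases hγK : γ ∈ K'
      · have hKJ : K' = J ∪ {γ} := hKeq hγK
        suffices hlt : J.ncard ≤ I.ncard by omega
        by_contra hgt
        have hJcard : J.ncard = I.ncard + 1 := by omega
        have hJfin : J.Finite := hAfin.subset hJA
        have hJdep : M.Dep J := by
          rw [← Matroid.not_indep_iff (hJA.trans hAE)]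
          intro hJi
          exact hgt (indep_ncard_le_of_basis hfin hI hJi hJA)
        obtain ⟨C', hC', hC'J, hC'X, huniq⟩ :=
          exists_unique_circuit_of_indep' hsplit hφ hfin (hJA.trans hAE) hJ' hJdep
        by_cases heJ : e ∈ J
        · have hdep := dep'_gamma_of_OX_subset hsplit ⟨hC', hC'X⟩ hC'J heJ (hJA.trans hAE)
          rw [← hKJ] at hdep
          exact hdep.not_indep hK'
        · obtain ⟨c', hc'⟩ := hC'.nonempty
          have hJc' : M.Indep (J \ {c'}) := by
            refine indep_of_no_circuit hfin ((diff_subset).trans (hJA.trans hAE)) ?_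
            intro D hD hDJ
            have := huniq D hD (hDJ.trans diff_subset)
            rw [this] at hDJ
            exact (hDJ hc').2 rfl
          have hJc'card : (J \ {c'}).ncard = I.ncard := by
            rw [Set.ncard_diff (singleton_subset_iff.mpr (hC'J hc')), Set.ncard_singleton,
              hJcard]
            omega
          have hbasis : M.IsBasis (J \ {c'}) A :=
            basis_of_indep_ncard hfin hJc' ((diff_subset).trans hJA) hI hJc'card.ge
          have hecl : e ∈ M.closure (J \ {c'}) := by
            rw [hbasis.closure_eq_closure]
            exact hR
          have heJc' : e ∉ J \ {c'} := fun h => heJ h.1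
          obtain ⟨C₀, hC₀, heC₀, hC₀sub⟩ := fund_circuit hfin hJc' hecl heJc'
          have hC₀J : C₀ \ {e} ⊆ J := by
            rintro y ⟨hy, hye⟩
            rcases hC₀sub hy with h' | h'
            · exact absurd h' hye
            · exact h'.1
          by_cases hC₀X : Odd ((C₀ ∩ X).ncard)
          · have hdep := dep'_gamma_of_OX_mem hsplit ⟨hC₀, hC₀X⟩ heC₀ hC₀J (hJA.trans hAE)
            rw [← hKJ] at hdep
            exact hdep.not_indep hK'
          · have hC₀EX : IsCircuit M' C₀ :=
              EX_circuit' hsplit ⟨hC₀, Nat.not_odd_iff_even.mp hC₀X⟩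
            have heC' : e ∉ C' := fun h => heJ (hC'J h)
            have hC'γ : IsCircuit M' (C' ∪ {e, γ}) :=
              OX_nmem_gamma_circuit' hsplit ⟨hC', hC'X⟩ heC'
            have hne : C₀ ≠ C' ∪ {e, γ} := by
              intro h
              exact hγE (hC₀.subset_ground (h ▸ (Or.inr (Or.inr rfl))))
            obtain ⟨C'', hC'', hC''sub⟩ := circuit_elim (hsplit.ground_finite hfin)
              hC₀EX hC'γ hne ⟨heC₀, Or.inr (Or.inl rfl)⟩
            have hC''K : C'' ⊆ K' := by
              rw [hKJ]
              intro y hy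
              obtain ⟨hy1, hy2⟩ := hC''sub hy
              rcases hy1 with h' | h' | h' | h'
              · exact Or.inl (hC₀J ⟨h', hy2⟩)
              · exact Or.inl (hC'J h')
              · exact absurd h' hy2
              · exact Or.inr h'
            exact hC''.not_subset_indep hK' hC''K
      · have : K' = J := by rw [hJdef, diff_singleton_eq_self hγK]
        rw [this]
        exact hJb
    · have hQ : ¬ ∃ C, IsOX M X C ∧ C ⊆ A ∪ {e} := fun hQ => h3 (Or.inl ⟨hP, hQ⟩)
      have hIi' : M'.Indep I := indep'_of_indep hsplit haE hγE hfin hI.indep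
      refine rk_eq_of_forall ⟨I ∪ {γ}, indep'_gamma_of_no_OX hsplit haE hγE haγ hfin
        hQ heE hIi' hI.subset hAE, union_subset_union hI.subset Subset.rfl, ?_⟩ ?_
      · rw [union_singleton, Set.ncard_insert_of_notMem hγI hIfin]
      · intro K hK hKsub
        obtain ⟨hJA, hKcard, hKeq⟩ := gamma_split hAfin hKsub
        have hJ' : M'.Indep (K \ {γ}) := hK.subset diff_subset
        have hJ : M.Indep (K \ {γ}) := M_indep_of_indep'_no_OX hsplit hφ hfin hP hJ' hJA hAE
        have := indep_ncard_le_of_basis hfin hI hJ hJA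
        omega
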